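/- With notation as above, the invariant ring ℂ[x₁, x₂]^{ψ_k} of the dicyclic group representation ψ_k is generated as a ℂ-algebra by u₁ = x₁²x₂², u₂ = x₁^{2h} + x₂^{2h}, and u₃ = x₁x₂(x₁^{2h} − x₂^{2h}), where h = m/gcd(m,k). -/

import Mathlib

open MvPolynomial

noncomputable def dicU₁ : MvPolynomial (Fin 2) ℂ := X 0 ^ 2 * X 1 ^ 2
noncomputable def dicU₂ (h : ℕ) : MvPolynomial (Fin 2) ℂ := X 0 ^ (2 * h) + X 1 ^ (2 * h)
noncomputable def dicU₃ (h : ℕ) : MvPolynomial (Fin 2) ℂ :=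
  X 0 * X 1 * (X 0 ^ (2 * h) - X 1 ^ (2 * h))

/-- The substitution of `ψ_k(σ) = diag(ζ^k, ζ^{-k})` on `ℂ[x₁,x₂]`. -/
noncomputable def dicSigmaSub (ζ : ℂ) (k : ℕ) :
    MvPolynomial (Fin 2) ℂ →ₐ[ℂ] MvPolynomial (Fin 2) ℂ :=
  aeval ![ζ ^ k • X 0, ζ⁻¹ ^ k • X 1]

/-- The substitution of `ψ_k(α) = [[0,1],[-1,0]]` on `ℂ[x₁,x₂]`. -/
noncomputable def dicAlphaSub : MvPolynomial (Fin 2) ℂ →ₐ[ℂ] MvPolynomial (Fin 2) ℂ :=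
  aeval ![X 1, -X 0]

/-! ### Auxiliary lemmas -/

/-- swap of a bi-index -/
noncomputable def swapD (d : Fin 2 →₀ ℕ) : Fin 2 →₀ ℕ :=
  Finsupp.single 0 (d 1) + Finsupp.single 1 (d 0)

lemma swapD_apply0 (d : Fin 2 →₀ ℕ) : swapD d 0 = d 1 := by
  simp [swapD, Finsupp.single_apply]
lemma swapD_apply1 (d : Fin 2 →₀ ℕ) : swapD d 1 = d 0 := by
  simp [swapD, Finsupp.single_apply]
lemma swapD_swapD (d : Fin 2 →₀ ℕ) : swapD (swapD d) = d := by
  ext i; fin_cases i <;> simp [swapD_apply0, swapD_apply1]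

lemma monomial_eq_mon (d : Fin 2 →₀ ℕ) (c : ℂ) :
    monomial d c = C c * (X 0 ^ (d 0) * X 1 ^ (d 1)) := by
  rw [monomial_eq, Finsupp.prod_fintype _ _ (fun i => pow_zero _), Fin.prod_univ_two]

lemma sigma_monomial (ζ : ℂ) (k : ℕ) (d : Fin 2 →₀ ℕ) (c : ℂ) :
    dicSigmaSub ζ k (monomial d c) = ((ζ^k)^(d 0) * (ζ⁻¹^k)^(d 1)) • monomial d c := by
  rw [monomial_eq_mon]
  simp only [dicSigmaSub, map_mul, map_pow, aeval_X, aeval_C, Matrix.cons_val_zero,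
    Matrix.cons_val_one, Matrix.head_cons, smul_pow]
  rw [smul_mul_smul_comm]
  rw [Algebra.smul_def, Algebra.smul_def]
  simp only [algebraMap_eq]
  ring

lemma alpha_monomial (d : Fin 2 →₀ ℕ) (c : ℂ) :
    dicAlphaSub (monomial d c) = ((-1:ℂ)^(d 1)) • monomial (swapD d) c := by
  rw [monomial_eq_mon]
  rw [monomial_eq_mon (swapD d), swapD_apply0, swapD_apply1]
  simp only [dicAlphaSub, map_mul, map_pow, aeval_X, aeval_C, Matrix.cons_val_zero,
    Matrix.cons_val_one, Matrix.head_cons]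
  rw [Algebra.smul_def]
  simp only [algebraMap_eq, map_pow, map_neg, map_one]
  ring

lemma coeff_sigma (ζ : ℂ) (k : ℕ) (f : MvPolynomial (Fin 2) ℂ) (e : Fin 2 →₀ ℕ) :
    coeff e (dicSigmaSub ζ k f) = ((ζ^k)^(e 0) * (ζ⁻¹^k)^(e 1)) * coeff e f := by
  induction f using MvPolynomial.induction_on' with
  | monomial d c =>
    rw [sigma_monomial, coeff_smul, coeff_monomial]
    by_cases hde : d = e
    · subst hde; simp [smul_eq_mul]
    · simp [hde]
  | add p q hp hq => simp [map_add, coeff_add, hp, hq]; ring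

lemma coeff_alpha (f : MvPolynomial (Fin 2) ℂ) (e : Fin 2 →₀ ℕ) :
    coeff e (dicAlphaSub f) = ((-1:ℂ)^(e 0)) * coeff (swapD e) f := by
  induction f using MvPolynomial.induction_on' with
  | monomial d c =>
    rw [alpha_monomial, coeff_smul, coeff_monomial, smul_eq_mul]
    by_cases hde : swapD d = e
    · have hd : d = swapD e := by rw [← hde, swapD_swapD]
      have h1 : d 1 = e 0 := by rw [hd, swapD_apply1]
      simp [hde, hd, h1, swapD_swapD, swapD_apply1]
    · have hd : d ≠ swapD e := fun hc => hde (by rw [hc, swapD_swapD])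
      simp [hde, hd]
  | add p q hp hq => simp [map_add, coeff_add, hp, hq]; ring

lemma keyP (h : ℕ) : ∀ t : ℕ,
    (X 0 ^ (2*h*t) + X 1 ^ (2*h*t) : MvPolynomial (Fin 2) ℂ) ∈
      Algebra.adjoin ℂ {dicU₁, dicU₂ h, dicU₃ h} := by
  intro t
  induction t using Nat.strong_induction_on with
  | _ t ih =>
    match t with
    | 0 =>
      have : (X 0 ^ (2*h*0) + X 1 ^ (2*h*0) : MvPolynomial (Fin 2) ℂ) = 1 + 1 := by
        norm_num
      rw [this]
      exact add_mem (one_mem _) (one_mem _)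
    | 1 =>
      have : (X 0 ^ (2*h*1) + X 1 ^ (2*h*1) : MvPolynomial (Fin 2) ℂ) = dicU₂ h := by
        rw [dicU₂]; ring_nf
      rw [this]
      exact Algebra.subset_adjoin (by simp)
    | (t+2) =>
      have hid : (X 0 ^ (2*h*(t+2)) + X 1 ^ (2*h*(t+2)) : MvPolynomial (Fin 2) ℂ) =
          dicU₂ h * (X 0 ^ (2*h*(t+1)) + X 1 ^ (2*h*(t+1)))
            - dicU₁ ^ h * (X 0 ^ (2*h*t) + X 1 ^ (2*h*t)) := by
        rw [dicU₁, dicU₂]; ring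
      rw [hid]
      exact sub_mem (mul_mem (Algebra.subset_adjoin (by simp)) (ih (t+1) (by omega)))
        (mul_mem (pow_mem (Algebra.subset_adjoin (by simp)) h) (ih t (by omega)))

lemma keyQ (h : ℕ) : ∀ t : ℕ,
    (X 0 * X 1 * (X 0 ^ (2*h*t) - X 1 ^ (2*h*t)) : MvPolynomial (Fin 2) ℂ) ∈
      Algebra.adjoin ℂ {dicU₁, dicU₂ h, dicU₃ h} := by
  intro t
  induction t using Nat.strong_induction_on with
  | _ t ih =>
    match t with
    | 0 =>
      have : (X 0 * X 1 * (X 0 ^ (2*h*0) - X 1 ^ (2*h*0)) : MvPolynomial (Fin 2) ℂ) = 0 := by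
        norm_num
      rw [this]
      exact zero_mem _
    | 1 =>
      have : (X 0 * X 1 * (X 0 ^ (2*h*1) - X 1 ^ (2*h*1)) : MvPolynomial (Fin 2) ℂ) =
          dicU₃ h := by rw [dicU₃]; ring_nf
      rw [this]
      exact Algebra.subset_adjoin (by simp)
    | (t+2) =>
      have hid : (X 0 * X 1 * (X 0 ^ (2*h*(t+2)) - X 1 ^ (2*h*(t+2))) :
            MvPolynomial (Fin 2) ℂ) =
          dicU₂ h * (X 0 * X 1 * (X 0 ^ (2*h*(t+1)) - X 1 ^ (2*h*(t+1))))
            - dicU₁ ^ h * (X 0 * X 1 * (X 0 ^ (2*h*t) - X 1 ^ (2*h*t))) := by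
        rw [dicU₁, dicU₂]; ring
      rw [hid]
      exact sub_mem (mul_mem (Algebra.subset_adjoin (by simp)) (ih (t+1) (by omega)))
        (mul_mem (pow_mem (Algebra.subset_adjoin (by simp)) h) (ih t (by omega)))

/-- the symmetrized monomial lemma -/
lemma Mmem (h b t : ℕ) :
    (X 0 ^ (b + 2*h*t) * X 1 ^ b + ((-1:ℂ)^b) • (X 0 ^ b * X 1 ^ (b + 2*h*t)) :
        MvPolynomial (Fin 2) ℂ) ∈ Algebra.adjoin ℂ {dicU₁, dicU₂ h, dicU₃ h} := by
  rcases Nat.even_or_odd b with ⟨c, hc⟩ | ⟨c, hc⟩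
  · have hsign : ((-1:ℂ)^b) = 1 := by
      rw [hc, ← two_mul, pow_mul]; norm_num
    have hid : (X 0 ^ (b + 2*h*t) * X 1 ^ b + ((-1:ℂ)^b) • (X 0 ^ b * X 1 ^ (b + 2*h*t)) :
          MvPolynomial (Fin 2) ℂ) =
        dicU₁ ^ c * (X 0 ^ (2*h*t) + X 1 ^ (2*h*t)) := by
      rw [hsign, one_smul, hc, dicU₁, ← two_mul]; ring
    rw [hid]
    exact mul_mem (pow_mem (Algebra.subset_adjoin (by simp)) c) (keyP h t)
  · have hsign : ((-1:ℂ)^b) = -1 := by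
      rw [hc, pow_add, pow_mul]; norm_num
    have hid : (X 0 ^ (b + 2*h*t) * X 1 ^ b + ((-1:ℂ)^b) • (X 0 ^ b * X 1 ^ (b + 2*h*t)) :
          MvPolynomial (Fin 2) ℂ) =
        dicU₁ ^ c * (X 0 * X 1 * (X 0 ^ (2*h*t) - X 1 ^ (2*h*t))) := by
      rw [hsign, neg_smul, one_smul, hc, dicU₁]; ring
    rw [hid]
    exact mul_mem (pow_mem (Algebra.subset_adjoin (by simp)) c) (keyQ h t)

/-- number theory: combine σ-divisibility with parity -/
lemma divLem (m k h : ℕ) (hm : 0 < m) (hk : 0 < k) (hh : h = m / Nat.gcd m k)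
    (c : ℤ) (h1 : (2*(m:ℤ)) ∣ (k:ℤ) * c) (h2 : (2:ℤ) ∣ c) : (2*(h:ℤ)) ∣ c := by
  set g := Nat.gcd m k with hg
  have hd0 : 0 < g := Nat.gcd_pos_of_pos_left _ hm
  have hcop : Nat.Coprime (m / g) (k / g) := Nat.coprime_div_gcd_div_gcd hd0
  obtain ⟨k', hk'⟩ : g ∣ k := Nat.gcd_dvd_right m k
  obtain ⟨h', hm'⟩ : g ∣ m := Nat.gcd_dvd_left m k
  have hh' : h = h' := by rw [hh, hm', Nat.mul_div_cancel_left _ hd0]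
  have hk'' : k / g = k' := by rw [hk', Nat.mul_div_cancel_left _ hd0]
  have hm'' : m / g = h' := by rw [hm', Nat.mul_div_cancel_left _ hd0]
  rw [hm'', hk''] at hcop
  obtain ⟨c', rfl⟩ := h2
  obtain ⟨e, he⟩ := h1
  have hkz : (k:ℤ) = (g : ℤ) * k' := by exact_mod_cast hk'
  have hmz : (m:ℤ) = (g : ℤ) * h' := by exact_mod_cast hm'
  have h2g : (2*(g : ℤ)) ≠ 0 := by
    have : (0:ℤ) < g := by exact_mod_cast hd0
    positivity
  have hdvd' : (h':ℤ) ∣ (k':ℤ) * c' := by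
    refine ⟨e, mul_left_cancel₀ h2g ?_⟩
    rw [hkz, hmz] at he
    linarith
  have hcopZ : IsCoprime (h':ℤ) (k':ℤ) := by
    rw [Int.isCoprime_iff_gcd_eq_one, Int.gcd_natCast_natCast]
    exact hcop
  have hfin : (h':ℤ) ∣ c' := hcopZ.dvd_of_dvd_mul_left hdvd'
  rw [hh']
  exact mul_dvd_mul_left 2 hfin

/-- The invariant ring `ℂ[x₁,x₂]^{ψ_k}` of the dicyclic group representation `ψ_k`
is generated as a `ℂ`-algebra by `u₁ = x₁²x₂²`, `u₂ = x₁^{2h} + x₂^{2h}` and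
`u₃ = x₁x₂(x₁^{2h} - x₂^{2h})`, where `h = m / gcd(m,k)`. -/
theorem stmt_4 (m k : ℕ) (hm : 0 < m) (hk : 0 < k) (ζ : ℂ)
    (hζ : IsPrimitiveRoot ζ (2 * m)) (h : ℕ) (hh : h = m / Nat.gcd m k)
    (f : MvPolynomial (Fin 2) ℂ) :
    (dicSigmaSub ζ k f = f ∧ dicAlphaSub f = f) ↔
      f ∈ Algebra.adjoin ℂ {dicU₁, dicU₂ h, dicU₃ h} := by
  have hζ0 : ζ ≠ 0 := hζ.ne_zero (by omega)
  -- basic scalar facts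
  have hs1 : ζ^k * ζ⁻¹^k = 1 := by
    rw [← mul_pow, mul_inv_cancel₀ hζ0, one_pow]
  have hkh : k * (2*h) = 2*m*(k / Nat.gcd m k) := by
    set d := Nat.gcd m k with hd
    have hd0 : 0 < d := Nat.gcd_pos_of_pos_left _ hm
    obtain ⟨k', hk'⟩ : d ∣ k := Nat.gcd_dvd_right m k
    obtain ⟨h', hm'⟩ : d ∣ m := Nat.gcd_dvd_left m k
    have h1 : h = h' := by rw [hh, hm', Nat.mul_div_cancel_left _ hd0]
    have h2 : k / d = k' := by rw [hk', Nat.mul_div_cancel_left _ hd0]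
    rw [h1, h2, hk', hm']; ring
  have hs2 : (ζ^k)^(2*h) = 1 := by
    rw [← pow_mul, hkh, pow_mul, hζ.pow_eq_one, one_pow]
  have hs3 : (ζ⁻¹^k)^(2*h) = 1 := by
    rw [inv_pow, inv_pow, hs2, inv_one]
  constructor
  · rintro ⟨hσ, hα⟩
    set A := Algebra.adjoin ℂ {dicU₁, dicU₂ h, dicU₃ h} with hA
    have hcoefσ : ∀ d, ((ζ^k)^(d 0) * (ζ⁻¹^k)^(d 1)) * coeff d f = coeff d f := by
      intro d; rw [← coeff_sigma, hσ]
    have hswap : ∀ d, coeff (swapD d) f = ((-1:ℂ)^(d 1)) * coeff d f := by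
      intro d
      have := coeff_alpha f (swapD d)
      rw [hα, swapD_swapD, swapD_apply0] at this
      exact this
    have hpar : ∀ d ∈ f.support, Even (d 0 + d 1) := by
      intro d hd
      by_contra hodd
      have hO : Odd (d 0 + d 1) := Nat.odd_iff.mpr (Nat.not_even_iff.mp hodd)
      have h1 := coeff_alpha f d
      rw [hα, hswap d] at h1
      rw [← mul_assoc, ← pow_add] at h1
      rw [Odd.neg_one_pow hO] at h1
      have hcd : coeff d f ≠ 0 := mem_support_iff.mp hd
      have : (2:ℂ) * coeff d f = 0 := by linear_combination h1
      simp at this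
      exact hcd this
    have hdvd : ∀ d ∈ f.support, (2*(h:ℤ)) ∣ ((d 0 : ℤ) - (d 1 : ℤ)) := by
      intro d hd
      have hcd : coeff d f ≠ 0 := mem_support_iff.mp hd
      have hs : (ζ^k)^(d 0) * (ζ⁻¹^k)^(d 1) = 1 :=
        mul_right_cancel₀ hcd (by rw [one_mul]; exact hcoefσ d)
      rw [← pow_mul, ← pow_mul, inv_pow] at hs
      have hz : ζ ^ (k * d 0) = ζ ^ (k * d 1) :=
        (div_eq_one_iff_eq (pow_ne_zero _ hζ0)).mp (by rw [div_eq_mul_inv]; exact hs)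
      have hzp : ζ ^ (((k * d 0 : ℕ):ℤ) - ((k * d 1 : ℕ):ℤ)) = 1 := by
        rw [zpow_sub₀ hζ0, zpow_natCast, zpow_natCast, hz,
          div_self (pow_ne_zero _ hζ0)]
      have hdvd1 : (((2*m : ℕ)):ℤ) ∣ (((k * d 0 : ℕ):ℤ) - ((k * d 1 : ℕ):ℤ)) :=
        (hζ.zpow_eq_one_iff_dvd _).mp hzp
      have hdvd1' : (2*(m:ℤ)) ∣ (k:ℤ) * ((d 0 : ℤ) - (d 1 : ℤ)) := by
        obtain ⟨e, he⟩ := hdvd1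
        refine ⟨e, ?_⟩
        push_cast at he ⊢
        linarith
      have hpar' : (2:ℤ) ∣ ((d 0 : ℤ) - (d 1 : ℤ)) := by
        rcases hpar d hd with ⟨c, hc⟩
        omega
      exact divLem m k h hm hk hh _ hdvd1' hpar'
    -- membership of symmetrized monomials
    have termMem : ∀ d ∈ f.support,
        (X 0 ^ (d 0) * X 1 ^ (d 1) + ((-1:ℂ)^(d 1)) • (X 0 ^ (d 1) * X 1 ^ (d 0)) :
          MvPolynomial (Fin 2) ℂ) ∈ A := by
      intro d hd
      rcases le_or_gt (d 1) (d 0) with hle | hlt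
      · have hz2 : ((2*h:ℕ):ℤ) ∣ ((d 0 - d 1 : ℕ):ℤ) := by
          rw [Nat.cast_sub hle]
          push_cast
          exact hdvd d hd
        have h2d : (2*h) ∣ (d 0 - d 1) := by exact_mod_cast hz2
        obtain ⟨t, ht⟩ := h2d
        have hd0 : d 0 = d 1 + 2*h*t := by omega
        rw [hd0]
        exact Mmem h (d 1) t
      · have hz2 : ((2*h:ℕ):ℤ) ∣ ((d 1 - d 0 : ℕ):ℤ) := by
          rw [Nat.cast_sub hlt.le]
          push_cast
          have := dvd_neg.mpr (hdvd d hd)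
          rw [neg_sub] at this
          exact this
        have h2d : (2*h) ∣ (d 1 - d 0) := by exact_mod_cast hz2
        obtain ⟨t, ht⟩ := h2d
        have hd1 : d 1 = d 0 + 2*h*t := by omega
        have hsgn : ((-1:ℂ)^(d 1)) = (-1:ℂ)^(d 0) := by
          rw [hd1, pow_add, pow_mul, pow_mul]; norm_num
        have hexp : (X 0 ^ (d 0) * X 1 ^ (d 1) + ((-1:ℂ)^(d 1)) • (X 0 ^ (d 1) * X 1 ^ (d 0)) :
              MvPolynomial (Fin 2) ℂ) =
            ((-1:ℂ)^(d 0)) • (X 0 ^ (d 0 + 2*h*t) * X 1 ^ (d 0)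
              + ((-1:ℂ)^(d 0)) • (X 0 ^ (d 0) * X 1 ^ (d 0 + 2*h*t))) := by
          rw [hsgn, hd1, smul_add, smul_smul, ← pow_add,
            Even.neg_one_pow ⟨d 0, rfl⟩, one_smul]
          exact add_comm _ _
        rw [hexp]
        exact Subalgebra.smul_mem _ (Mmem h (d 0) t) _
    -- assemble
    have hsum : f + f = ∑ d ∈ f.support, (coeff d f) •
        (X 0 ^ (d 0) * X 1 ^ (d 1) + ((-1:ℂ)^(d 1)) • (X 0 ^ (d 1) * X 1 ^ (d 0)) :
          MvPolynomial (Fin 2) ℂ) := by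
      rw [Finset.sum_congr rfl (fun d _ => smul_add (coeff d f) _ _), Finset.sum_add_distrib]
      congr 1
      · conv_lhs => rw [← support_sum_monomial_coeff f]
        refine Finset.sum_congr rfl fun d _ => ?_
        rw [monomial_eq_mon, smul_eq_C_mul]
      · conv_lhs => rw [← support_sum_monomial_coeff f]
        refine (Finset.sum_nbij' (fun d => swapD d) (fun d => swapD d) ?_ ?_ ?_ ?_ ?_).symm
        · intro d hd
          rw [mem_support_iff] at hd ⊢
          rw [hswap]
          intro hcon
          rcases mul_eq_zero.mp hcon with h' | h'
          · exact pow_ne_zero _ (by norm_num : (-1:ℂ) ≠ 0) h'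
          · exact hd h'
        · intro d hd
          rw [mem_support_iff] at hd ⊢
          rw [hswap]
          intro hcon
          rcases mul_eq_zero.mp hcon with h' | h'
          · exact pow_ne_zero _ (by norm_num : (-1:ℂ) ≠ 0) h'
          · exact hd h'
        · intro d _; exact swapD_swapD d
        · intro d _; exact swapD_swapD d
        · intro d _
          show (coeff d f) • (((-1:ℂ)^(d 1)) • (X 0 ^ (d 1) * X 1 ^ (d 0))) =
            monomial (swapD d) (coeff (swapD d) f)
          rw [monomial_eq_mon, swapD_apply0, swapD_apply1, hswap d, smul_smul,
            mul_comm (coeff d f), smul_eq_C_mul]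
    have hmem2 : f + f ∈ A := by
      rw [hsum]
      exact Subalgebra.sum_mem _ fun d hd => Subalgebra.smul_mem _ (termMem d hd) _
    have : f = (2⁻¹:ℂ) • (f + f) := by
      rw [smul_add, ← add_smul]
      norm_num
    rw [this]
    exact Subalgebra.smul_mem _ hmem2 _
  · -- backward direction
    intro hf
    have hU1σ : dicSigmaSub ζ k dicU₁ = dicU₁ := by
      simp only [dicSigmaSub, dicU₁, map_mul, map_pow, aeval_X, Matrix.cons_val_zero,
        Matrix.cons_val_one, Matrix.head_cons]
      rw [smul_pow, smul_pow, smul_mul_smul_comm, ← mul_pow, hs1, one_pow, one_smul]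
    have hU2σ : dicSigmaSub ζ k (dicU₂ h) = dicU₂ h := by
      simp only [dicSigmaSub, dicU₂, map_add, map_pow, aeval_X, Matrix.cons_val_zero,
        Matrix.cons_val_one, Matrix.head_cons]
      rw [smul_pow, smul_pow, hs2, hs3, one_smul, one_smul]
    have hU3σ : dicSigmaSub ζ k (dicU₃ h) = dicU₃ h := by
      simp only [dicSigmaSub, dicU₃, map_mul, map_sub, map_pow, aeval_X, Matrix.cons_val_zero,
        Matrix.cons_val_one, Matrix.head_cons]
      rw [smul_pow, smul_pow, hs2, hs3, one_smul, one_smul, smul_mul_smul_comm, hs1, one_smul]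
    have hU1α : dicAlphaSub dicU₁ = dicU₁ := by
      simp only [dicAlphaSub, dicU₁, map_mul, map_pow, aeval_X, Matrix.cons_val_zero,
        Matrix.cons_val_one, Matrix.head_cons]
      ring
    have hU2α : dicAlphaSub (dicU₂ h) = dicU₂ h := by
      simp only [dicAlphaSub, dicU₂, map_add, map_pow, aeval_X, Matrix.cons_val_zero,
        Matrix.cons_val_one, Matrix.head_cons]
      rw [Even.neg_pow (even_two_mul h)]
      ring
    have hU3α : dicAlphaSub (dicU₃ h) = dicU₃ h := by
      simp only [dicAlphaSub, dicU₃, map_mul, map_sub, map_pow, aeval_X, Matrix.cons_val_zero,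
        Matrix.cons_val_one, Matrix.head_cons]
      rw [Even.neg_pow (even_two_mul h)]
      ring
    have hle : Algebra.adjoin ℂ {dicU₁, dicU₂ h, dicU₃ h} ≤
        (AlgHom.equalizer (dicSigmaSub ζ k) (AlgHom.id ℂ _)) ⊓
          (AlgHom.equalizer dicAlphaSub (AlgHom.id ℂ _)) := by
      apply Algebra.adjoin_le
      rintro x (rfl | rfl | rfl)
      · exact ⟨hU1σ, hU1α⟩
      · exact ⟨hU2σ, hU2α⟩
      · exact ⟨hU3σ, hU3α⟩
    obtain ⟨h1, h2⟩ := hle hf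
    exact ⟨h1, h2⟩
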